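/- For c > 0 and w ≥ 0, the Laplace transform of the zero-order Bessel kernel satisfies ∫₀^∞ exp(−c·t)·J₀(2√(w·t)) dt = (1/c)·exp(−w/c). -/

import Mathlib

open MeasureTheory Real

/-- Bessel function of the first kind of order zero, via its power series. -/
noncomputable def J0 (x : ℝ) : ℝ :=
  ∑' n : ℕ, (-1 : ℝ) ^ n / ((Nat.factorial n : ℝ) ^ 2) * (x / 2) ^ (2 * n)

lemma integrable_exp_mul_pow (c : ℝ) (hc : 0 < c) (n : ℕ) :
    IntegrableOn (fun t : ℝ => Real.exp (-c * t) * t ^ n) (Set.Ioi 0) := by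
  have := integrableOn_rpow_mul_exp_neg_mul_rpow (p := 1) (s := n) (b := c)
    (lt_of_lt_of_le neg_one_lt_zero (Nat.cast_nonneg n)) one_pos hc
  refine (this.congr_fun (fun t ht => ?_) measurableSet_Ioi)
  dsimp only
  rw [Real.rpow_one, Real.rpow_natCast, mul_comm]

lemma integral_exp_mul_pow (c : ℝ) (hc : 0 < c) (n : ℕ) :
    ∫ t in Set.Ioi (0 : ℝ), Real.exp (-c * t) * t ^ n
      = (Nat.factorial n : ℝ) / c ^ (n + 1) := by
  have h := Real.integral_rpow_mul_exp_neg_mul_Ioi (a := n + 1) (r := c)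
    (by positivity) hc
  rw [show ((n : ℝ) + 1 - 1) = (n : ℝ) by ring] at h
  have : ∫ t in Set.Ioi (0 : ℝ), Real.exp (-c * t) * t ^ n
      = ∫ t in Set.Ioi (0 : ℝ), t ^ (n : ℝ) * Real.exp (-(c * t)) := by
    refine setIntegral_congr_fun measurableSet_Ioi (fun t ht => ?_)
    rw [Real.rpow_natCast, neg_mul, mul_comm]
  rw [this, h, Real.Gamma_nat_eq_factorial,
    show ((n : ℝ) + 1) = ((n + 1 : ℕ) : ℝ) by push_cast; ring, Real.rpow_natCast,
    div_pow, one_pow, div_mul_eq_mul_div, one_mul]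

/-- Laplace transform of the zero-order Bessel kernel:
`∫₀^∞ exp(-c t) J₀(2√(w t)) dt = (1/c) exp(-w/c)` for `c > 0`, `w ≥ 0`. -/
theorem laplace_bessel_kernel (c w : ℝ) (hc : 0 < c) (hw : 0 ≤ w) :
    ∫ t in Set.Ioi (0 : ℝ), Real.exp (-c * t) * J0 (2 * Real.sqrt (w * t)) =
      (1 / c) * Real.exp (-w / c) := by
  set F : ℕ → ℝ → ℝ := fun n t =>
    Real.exp (-c * t) * ((-1 : ℝ) ^ n * w ^ n / ((Nat.factorial n : ℝ) ^ 2) * t ^ n) with hF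
  -- pointwise expansion on Ioi 0
  have hpt : ∀ t ∈ Set.Ioi (0 : ℝ),
      Real.exp (-c * t) * J0 (2 * Real.sqrt (w * t)) = ∑' n, F n t := by
    intro t ht
    have hwt : 0 ≤ w * t := mul_nonneg hw (le_of_lt ht)
    have hJ : J0 (2 * Real.sqrt (w * t))
        = ∑' n : ℕ, (-1 : ℝ) ^ n * w ^ n / ((Nat.factorial n : ℝ) ^ 2) * t ^ n := by
      unfold J0
      congr 1
      ext n
      have : (2 * Real.sqrt (w * t) / 2) ^ (2 * n) = (w * t) ^ n := by
        rw [mul_div_cancel_left₀ _ (two_ne_zero), pow_mul, Real.sq_sqrt hwt]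
      rw [this, mul_pow]
      ring
    rw [hJ, ← tsum_mul_left]
  rw [setIntegral_congr_fun measurableSet_Ioi hpt]
  -- integrability of each term
  have hint : ∀ n, IntegrableOn (F n) (Set.Ioi 0) := by
    intro n
    have h1 : IntegrableOn
        (fun t => ((-1 : ℝ) ^ n * w ^ n / ((Nat.factorial n : ℝ) ^ 2)) *
          (Real.exp (-c * t) * t ^ n)) (Set.Ioi 0) :=
      (integrable_exp_mul_pow c hc n).const_mul _
    refine h1.congr_fun (fun t _ => ?_) measurableSet_Ioi
    simp only [hF]; ring
  -- value of each term's integral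
  have hval : ∀ n, ∫ t in Set.Ioi (0 : ℝ), F n t
      = (1 / c) * ((-w / c) ^ n / (Nat.factorial n : ℝ)) := by
    intro n
    have : ∫ t in Set.Ioi (0 : ℝ), F n t
        = ((-1 : ℝ) ^ n * w ^ n / ((Nat.factorial n : ℝ) ^ 2))
          * ∫ t in Set.Ioi (0 : ℝ), Real.exp (-c * t) * t ^ n := by
      rw [← integral_const_mul]
      refine setIntegral_congr_fun measurableSet_Ioi (fun t _ => ?_)
      simp only [hF]; ring
    rw [this, integral_exp_mul_pow c hc n]
    have hf : (0 : ℝ) < (Nat.factorial n : ℝ) := by positivity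
    field_simp
    rw [neg_pow]
    rw [neg_pow (w / c), div_pow, pow_succ]
    field_simp
    rw [one_pow, one_mul]
  -- norm integrals
  have hnorm : ∀ n, ∫ t in Set.Ioi (0 : ℝ), ‖F n t‖
      = (1 / c) * ((w / c) ^ n / (Nat.factorial n : ℝ)) := by
    intro n
    have : ∀ t ∈ Set.Ioi (0 : ℝ), ‖F n t‖
        = Real.exp (-c * t) * (w ^ n / ((Nat.factorial n : ℝ) ^ 2) * t ^ n) := by
      intro t ht
      simp only [hF, Real.norm_eq_abs, abs_mul, abs_div, abs_pow, abs_neg, abs_one, one_pow,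
        one_mul, Nat.abs_cast, abs_of_pos (Real.exp_pos (-c * t)), abs_of_nonneg hw,
        abs_of_pos (Set.mem_Ioi.mp ht)]
    rw [setIntegral_congr_fun measurableSet_Ioi this]
    have : ∫ t in Set.Ioi (0 : ℝ),
        Real.exp (-c * t) * (w ^ n / ((Nat.factorial n : ℝ) ^ 2) * t ^ n)
        = (w ^ n / ((Nat.factorial n : ℝ) ^ 2)) *
          ∫ t in Set.Ioi (0 : ℝ), Real.exp (-c * t) * t ^ n := by
      rw [← integral_const_mul]
      refine setIntegral_congr_fun measurableSet_Ioi (fun t _ => ?_)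
      ring
    rw [this, integral_exp_mul_pow c hc n]
    have hf : (0 : ℝ) < (Nat.factorial n : ℝ) := by positivity
    rw [div_pow, pow_succ]
    field_simp
    ring
  -- summability of norm integrals
  have hsum : Summable (fun n => ∫ t in Set.Ioi (0 : ℝ), ‖F n t‖) := by
    simp_rw [hnorm]
    exact ((Real.summable_pow_div_factorial (w / c)).mul_left _)
  rw [← MeasureTheory.integral_tsum_of_summable_integral_norm hint hsum]
  simp_rw [hval]
  rw [tsum_mul_left]
  congr 1
  rw [Real.exp_eq_exp_ℝ, NormedSpace.exp_eq_tsum_div]
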